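/- Suppose an infinite set F ⊆ ℤ satisfies F = ⨆_i φ_i(F) = ⨆_j ψ_j(F) as disjoint unions, where φ_i(x) = a_i·x + b_i (i = 1,…,n) and ψ_j(x) = c_j·x + d_j (j = 1,…,m) are affine maps with integer coefficients, |a_i| > 1 and |c_j| > 1. If α and β are the unique real numbers with ∑_i |a_i|^{-α} = 1 and ∑_j |c_j|^{-β} = 1, then α = β. -/

import Mathlib

open Set Finset in
lemma myncard_biUnion_le {α ι : Type*} (t : Finset ι) (s : ι → Set α) :
    (⋃ i ∈ t, s i).ncard ≤ ∑ i ∈ t, (s i).ncard := by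
  classical
  induction t using Finset.induction with
  | empty => simp
  | @insert a t ha ih =>
      rw [Finset.sum_insert ha, Finset.set_biUnion_insert]
      refine le_trans (Set.ncard_union_le _ _) ?_
      exact Nat.add_le_add_left ih _

open Set Finset in
lemma mysum_ncard_le {α ι : Type*} (t : Finset ι) (s : ι → Set α)
    (hdisj : ∀ i ∈ t, ∀ j ∈ t, i ≠ j → Disjoint (s i) (s j))
    (u : Set α) (hu : u.Finite) (hsub : ∀ i ∈ t, s i ⊆ u) :
    ∑ i ∈ t, (s i).ncard ≤ u.ncard := by
  classical
  induction t using Finset.induction generalizing u with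
  | empty => simp
  | @insert a t ha ih =>
      rw [Finset.sum_insert ha]
      have hsu : s a ⊆ u := hsub a (Finset.mem_insert_self a t)
      have h1 : ∑ i ∈ t, (s i).ncard ≤ (u \ s a).ncard := by
        refine ih (fun i hi j hj hij => hdisj i (Finset.mem_insert_of_mem hi) j
          (Finset.mem_insert_of_mem hj) hij) (u \ s a) hu.diff (fun i hi => ?_)
        refine Set.subset_diff.mpr ⟨hsub i (Finset.mem_insert_of_mem hi), ?_⟩
        exact hdisj i (Finset.mem_insert_of_mem hi) a (Finset.mem_insert_self a t)
          (by rintro rfl; exact ha hi)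
      have h2 : (s a).ncard + (u \ s a).ncard = u.ncard := by
        rw [← Set.ncard_union_eq disjoint_sdiff_right (hu.subset hsu) hu.diff,
          Set.union_diff_cancel hsu]
      omega
section aux
-- counting recursion lemmas
lemma count_up (F : Set ℤ) {n : ℕ} (a b : Fin n → ℤ)
    (ha : ∀ i, 1 < |a i|)
    (hunion : F = ⋃ i, (fun x => a i * x + b i) '' F) (T : ℕ) :
    (F ∩ Set.Icc (-(T:ℤ)) (T:ℤ)).ncard ≤
      ∑ i, (F ∩ Set.Icc (-(((T + (Finset.univ.sup fun i => (b i).natAbs)) / (a i).natAbs : ℕ) : ℤ))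
        (((T + (Finset.univ.sup fun i => (b i).natAbs)) / (a i).natAbs : ℕ) : ℤ)).ncard := by
  classical
  set B : ℕ := Finset.univ.sup fun i => (b i).natAbs with hB
  set e : Fin n → ℕ := fun i => (T + B) / (a i).natAbs with he
  have hfin : ∀ (d : ℕ), (F ∩ Set.Icc (-(d:ℤ)) (d:ℤ)).Finite :=
    fun d => (Set.finite_Icc _ _).subset Set.inter_subset_right
  have hsub : F ∩ Set.Icc (-(T:ℤ)) (T:ℤ) ⊆
      ⋃ i ∈ Finset.univ, (fun x => a i * x + b i) '' (F ∩ Set.Icc (-((e i : ℕ):ℤ)) ((e i : ℕ):ℤ)) := by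
    rintro x ⟨hxF, hxI⟩
    have hx2 : x ∈ ⋃ i, (fun x => a i * x + b i) '' F := hunion ▸ hxF
    obtain ⟨i, y, hyF, hxy⟩ := by simpa using hx2
    have hAi : 2 ≤ (a i).natAbs := by
      have := ha i; rw [Int.abs_eq_natAbs] at this; exact_mod_cast this
    have hbB : (b i).natAbs ≤ B := hB ▸ Finset.le_sup (f := fun i => (b i).natAbs) (Finset.mem_univ i)
    have hIcc := Set.mem_Icc.mp hxI
    have h1 : (a i * y).natAbs ≤ T + B := by omega
    have h2 : (a i).natAbs * y.natAbs ≤ T + B := by rw [← Int.natAbs_mul]; exact h1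
    have h3 : y.natAbs ≤ e i := by
      rw [he, Nat.le_div_iff_mul_le (by omega), Nat.mul_comm]
      exact h2
    refine Set.mem_biUnion (Finset.mem_univ i) ⟨y, ⟨hyF, Set.mem_Icc.mpr (by omega)⟩, hxy⟩
  calc (F ∩ Set.Icc (-(T:ℤ)) (T:ℤ)).ncard
      ≤ (⋃ i ∈ Finset.univ, (fun x => a i * x + b i) ''
          (F ∩ Set.Icc (-((e i : ℕ):ℤ)) ((e i : ℕ):ℤ))).ncard := by
        refine Set.ncard_le_ncard hsub ?_
        exact Set.Finite.biUnion Finset.univ.finite_toSet fun i _ => ((hfin (e i)).image _)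
  _ ≤ ∑ i, ((fun x => a i * x + b i) '' (F ∩ Set.Icc (-((e i : ℕ):ℤ)) ((e i : ℕ):ℤ))).ncard :=
      myncard_biUnion_le Finset.univ _
  _ ≤ ∑ i, (F ∩ Set.Icc (-((e i : ℕ):ℤ)) ((e i : ℕ):ℤ)).ncard :=
      Finset.sum_le_sum fun i _ => Set.ncard_image_le (hfin (e i))

lemma count_down (F : Set ℤ) {m : ℕ} (c d : Fin m → ℤ)
    (hc : ∀ j, 1 < |c j|)
    (hunion : F = ⋃ j, (fun x => c j * x + d j) '' F)
    (hdisj : ∀ i j, i ≠ j →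
      Disjoint ((fun x => c i * x + d i) '' F) ((fun x => c j * x + d j) '' F))
    (T : ℕ) (hT : (Finset.univ.sup fun j => (d j).natAbs) ≤ T) :
    ∑ j, (F ∩ Set.Icc (-(((T - (Finset.univ.sup fun j => (d j).natAbs)) / (c j).natAbs : ℕ) : ℤ))
        (((T - (Finset.univ.sup fun j => (d j).natAbs)) / (c j).natAbs : ℕ) : ℤ)).ncard ≤
      (F ∩ Set.Icc (-(T:ℤ)) (T:ℤ)).ncard := by
  classical
  set B : ℕ := Finset.univ.sup fun j => (d j).natAbs with hB
  set e : Fin m → ℕ := fun j => (T - B) / (c j).natAbs with he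
  have hfin : ∀ (k : ℕ), (F ∩ Set.Icc (-(k:ℤ)) (k:ℤ)).Finite :=
    fun k => (Set.finite_Icc _ _).subset Set.inter_subset_right
  set s : Fin m → Set ℤ := fun j =>
    (fun x => c j * x + d j) '' (F ∩ Set.Icc (-((e j : ℕ):ℤ)) ((e j : ℕ):ℤ)) with hs
  have hinj : ∀ j, Function.Injective (fun x => c j * x + d j) := by
    intro j u v huv
    have hc0 : c j ≠ 0 := by
      have := hc j; rcases lt_or_ge (c j) 0 with h | h
      · omega
      · rw [abs_of_nonneg h] at this; omega
    simpa using mul_left_cancel₀ hc0 (by simpa using huv : c j * u = c j * v)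
  have hcard : ∀ j, (s j).ncard = (F ∩ Set.Icc (-((e j : ℕ):ℤ)) ((e j : ℕ):ℤ)).ncard :=
    fun j => Set.ncard_image_of_injective _ (hinj j)
  have hsub : ∀ j, s j ⊆ F ∩ Set.Icc (-(T:ℤ)) (T:ℤ) := by
    rintro j x ⟨y, ⟨hyF, hyI⟩, rfl⟩
    have hCj : 2 ≤ (c j).natAbs := by
      have := hc j; rw [Int.abs_eq_natAbs] at this; exact_mod_cast this
    have hdB : (d j).natAbs ≤ B := hB ▸ Finset.le_sup (f := fun j => (d j).natAbs) (Finset.mem_univ j)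
    have hyIcc := Set.mem_Icc.mp hyI
    have hy : y.natAbs ≤ e j := by omega
    constructor
    · rw [hunion]
      exact Set.mem_iUnion.mpr ⟨j, ⟨y, hyF, rfl⟩⟩
    · have h1 : (c j).natAbs * y.natAbs ≤ (c j).natAbs * e j := Nat.mul_le_mul_left _ hy
      have h2 : (c j).natAbs * e j ≤ T - B := by
        rw [he, mul_comm]; exact Nat.div_mul_le_self _ _
      have h3 : (c j * y).natAbs ≤ T - B := by rw [Int.natAbs_mul]; omega
      have h4 : -(T:ℤ) ≤ c j * y + d j ∧ c j * y + d j ≤ T := by omega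
      exact Set.mem_Icc.mpr h4
  have hd : ∀ i ∈ Finset.univ, ∀ j ∈ Finset.univ, i ≠ j → Disjoint (s i) (s j) := by
    intro i _ j _ hij
    exact (hdisj i j hij).mono (Set.image_mono Set.inter_subset_left)
      (Set.image_mono Set.inter_subset_left)
  calc ∑ j, (F ∩ Set.Icc (-((e j : ℕ):ℤ)) ((e j : ℕ):ℤ)).ncard
      = ∑ j, (s j).ncard := by simp_rw [hcard]
  _ ≤ (F ∩ Set.Icc (-(T:ℤ)) (T:ℤ)).ncard :=
      mysum_ncard_le Finset.univ s hd _ (hfin T) (fun j _ => hsub j)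
end aux

lemma growth_upper (N : ℕ → ℕ) {n : ℕ} (A : Fin n → ℕ) (B : ℕ)
    (hA : ∀ i, 2 ≤ A i) (s : ℝ) (hs : 0 < s)
    (hθpos : 0 < ∑ i, ((A i : ℝ)) ^ (-s))
    (hθ : ∑ i, ((A i : ℝ)) ^ (-s) < 1)
    (hrec : ∀ T : ℕ, N T ≤ ∑ i, N ((T + B) / A i)) :
    ∃ C : ℝ, 0 < C ∧ ∀ T : ℕ, (N T : ℝ) ≤ C * ((T : ℝ) + 1) ^ s := by
  classical
  set θ : ℝ := ∑ i, ((A i : ℝ)) ^ (-s) with hθdef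
  set r : ℝ := θ ^ (-(1:ℝ)/s) with hrdef
  have hr1 : 1 < r := by
    rw [hrdef]
    exact Real.one_lt_rpow_iff_of_pos hθpos |>.mpr
      (Or.inr ⟨hθ, div_neg_of_neg_of_pos (by norm_num) hs⟩)
  have hrs : r ^ s * θ = 1 := by
    rw [hrdef, ← Real.rpow_mul hθpos.le, div_mul_cancel₀ _ hs.ne',
      Real.rpow_neg_one, inv_mul_cancel₀ hθpos.ne']
  set Amax : ℕ := Finset.univ.sup A with hAmax
  set K : ℕ := B + Amax + 1 with hK
  set T1 : ℕ := ⌈(K : ℝ) / (r - 1)⌉₊ + B + 1 with hT1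
  have hkey : ∀ T : ℕ, T1 ≤ T → ((T : ℝ) + K) ≤ r * ((T : ℝ) + 1) := by
    intro T hT
    have h00 : ⌈(K : ℝ) / (r - 1)⌉₊ + B + 1 ≤ T := hT1 ▸ hT
    have h0 : ⌈(K : ℝ) / (r - 1)⌉₊ ≤ T := by omega
    have h1 : ((K : ℝ) / (r - 1)) ≤ T :=
      le_trans (Nat.le_ceil _) (by exact_mod_cast h0)
    have h2 : (K : ℝ) ≤ (r - 1) * T := by
      rw [div_le_iff₀ (by linarith)] at h1; linarith
    nlinarith
  set C0 : ℕ := (Finset.range (T1 + 1)).sup N with hC0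
  refine ⟨(C0 : ℝ) + 1, by positivity, ?_⟩
  intro T
  induction T using Nat.strong_induction_on with
  | _ T ih =>
    rcases le_or_gt T T1 with hT | hT
    · have h1 : N T ≤ C0 := Finset.le_sup (Finset.mem_range.mpr (by omega))
      have h2 : (1:ℝ) ≤ ((T:ℝ)+1) ^ s :=
        Real.one_le_rpow (by linarith [Nat.cast_nonneg (α := ℝ) T]) hs.le
      have h1' : (N T : ℝ) ≤ (C0 : ℝ) := by exact_mod_cast h1
      nlinarith
    · have hrecT := hrec T
      have hstep : ∀ i : Fin n, ((N ((T + B) / A i) : ℝ)) ≤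
          ((C0:ℝ)+1) * ((T:ℝ) + K) ^ s * ((A i : ℝ)) ^ (-s) := by
        intro i
        have hAi := hA i
        have hApos : (0:ℝ) < (A i : ℝ) := by exact_mod_cast by omega
        have hBT : B < T := by omega
        have hd : (T + B) / A i < T := by
          have h1 : (T + B) / A i ≤ (T + B) / 2 := Nat.div_le_div_left hAi (by omega)
          have h2 : (T + B) / 2 < T := by omega
          omega
        have h3 := ih _ hd
        have h5 : (((T + B) / A i : ℕ) : ℝ) * (A i : ℝ) ≤ (T:ℝ) + B := by
          exact_mod_cast Nat.div_mul_le_self (T+B) (A i)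
        have h6 : (A i : ℝ) + (B:ℝ) ≤ (K:ℝ) := by
          have hle : A i ≤ Amax := Finset.le_sup (Finset.mem_univ i)
          exact_mod_cast by omega
        have h4 : (((T + B) / A i : ℕ) : ℝ) + 1 ≤ ((T:ℝ) + K) / (A i : ℝ) := by
          rw [le_div_iff₀ hApos]
          nlinarith
        calc ((N ((T + B) / A i) : ℝ)) ≤ ((C0:ℝ)+1) * ((((T + B) / A i : ℕ) : ℝ) + 1) ^ s := h3
        _ ≤ ((C0:ℝ)+1) * (((T:ℝ) + K) / (A i : ℝ)) ^ s := by
            have := Real.rpow_le_rpow (by positivity) h4 hs.le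
            nlinarith [Real.rpow_nonneg (by positivity : (0:ℝ) ≤ (((T + B) / A i : ℕ) : ℝ) + 1) s]
        _ = ((C0:ℝ)+1) * (((T:ℝ) + K) ^ s * ((A i : ℝ)) ^ (-s)) := by
            rw [Real.div_rpow (by positivity) (by positivity), Real.rpow_neg (by positivity),
              div_eq_mul_inv]
        _ = ((C0:ℝ)+1) * ((T:ℝ) + K) ^ s * ((A i : ℝ)) ^ (-s) := by ring
      have hTK : ((T:ℝ) + K) ^ s ≤ (r * ((T:ℝ)+1)) ^ s :=
        Real.rpow_le_rpow (by positivity) (hkey T hT.le) hs.le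
      calc (N T : ℝ) ≤ ∑ i, ((N ((T + B) / A i)) : ℝ) := by exact_mod_cast hrecT
      _ ≤ ∑ i, ((C0:ℝ)+1) * ((T:ℝ) + K) ^ s * ((A i : ℝ)) ^ (-s) :=
          Finset.sum_le_sum fun i _ => hstep i
      _ = ((C0:ℝ)+1) * ((T:ℝ) + K) ^ s * θ := by rw [← Finset.mul_sum]
      _ ≤ ((C0:ℝ)+1) * (r * ((T:ℝ) + 1)) ^ s * θ := by
          have h7 : (0:ℝ) ≤ (C0:ℝ) + 1 := by positivity
          exact mul_le_mul_of_nonneg_right (mul_le_mul_of_nonneg_left hTK h7) hθpos.le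
      _ = ((C0:ℝ)+1) * ((T:ℝ) + 1) ^ s * (r ^ s * θ) := by
          rw [Real.mul_rpow (by linarith) (by positivity)]; ring
      _ = ((C0:ℝ)+1) * ((T:ℝ) + 1) ^ s := by rw [hrs, mul_one]

set_option maxHeartbeats 1000000 in
lemma growth_lower (N : ℕ → ℕ) {m : ℕ} (A : Fin m → ℕ) (B : ℕ)
    (hA : ∀ j, 2 ≤ A j) (s : ℝ) (hs : 0 < s)
    (hθ : 1 < ∑ j, ((A j : ℝ)) ^ (-s))
    (hrec : ∀ T : ℕ, B ≤ T → ∑ j, N ((T - B) / A j) ≤ N T)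
    (T0 : ℕ) (hpos : ∀ T, T0 ≤ T → 1 ≤ N T) :
    ∃ c : ℝ, 0 < c ∧ ∃ T2 : ℕ, ∀ T : ℕ, T2 ≤ T → c * (T : ℝ) ^ s ≤ N T := by
  classical
  obtain ⟨θ, hθdef⟩ : ∃ x : ℝ, x = ∑ j, ((A j : ℝ)) ^ (-s) := ⟨_, rfl⟩
  rw [← hθdef] at hθ
  have hθpos : (0:ℝ) < θ := by linarith
  obtain ⟨ρ, hρdef⟩ : ∃ x : ℝ, x = θ ^ (-(1:ℝ)/s) := ⟨_, rfl⟩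
  have hρ0 : 0 < ρ := hρdef ▸ Real.rpow_pos_of_pos hθpos _
  have hρ1 : ρ < 1 := by
    rw [hρdef]
    exact Real.rpow_lt_one_of_one_lt_of_neg hθ (div_neg_of_neg_of_pos (by norm_num) hs)
  have hρs : ρ ^ s * θ = 1 := by
    rw [hρdef, ← Real.rpow_mul hθpos.le, div_mul_cancel₀ _ hs.ne',
      Real.rpow_neg_one, inv_mul_cancel₀ hθpos.ne']
  obtain ⟨Amax, hAmax⟩ : ∃ x : ℕ, x = Finset.univ.sup A := ⟨_, rfl⟩
  obtain ⟨K, hK⟩ : ∃ x : ℕ, x = B + Amax + 1 := ⟨_, rfl⟩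
  obtain ⟨Tρ, hTρ⟩ : ∃ x : ℕ, x = ⌈(K : ℝ) / (1 - ρ)⌉₊ := ⟨_, rfl⟩
  obtain ⟨Tb, hTb⟩ : ∃ x : ℕ, x = T0 + B + 1 := ⟨_, rfl⟩
  obtain ⟨Tc, hTc⟩ : ∃ x : ℕ, x = Amax * (Tb + 1) + B + Tρ + 1 := ⟨_, rfl⟩
  obtain ⟨c, hc⟩ : ∃ x : ℝ, x = 1 / ((Tc:ℝ)+1) ^ s := ⟨_, rfl⟩
  have hcpos : 0 < c := by rw [hc]; positivity
  refine ⟨c, hcpos, Tb, ?_⟩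
  intro T
  induction T using Nat.strong_induction_on with
  | _ T ih =>
    intro hTbT
    rcases le_or_gt T Tc with hT | hT
    · -- base case
      have h1 : (1:ℕ) ≤ N T := hpos T (by omega)
      have hTc' : (T:ℝ) ≤ (Tc:ℝ) := Nat.cast_le.mpr hT
      have h2 : ((T:ℝ)) ^ s ≤ ((Tc:ℝ)+1) ^ s :=
        Real.rpow_le_rpow (Nat.cast_nonneg T) (by linarith) hs.le
      have h3 : c * (T:ℝ) ^ s ≤ 1 := by
        rw [hc, div_mul_eq_mul_div, div_le_one (by positivity)]
        linarith
      calc c * (T:ℝ)^s ≤ 1 := h3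
      _ ≤ (N T : ℝ) := by exact_mod_cast h1
    · -- inductive step
      have hBT : B ≤ T := by omega
      have hrecT := hrec T hBT
      have hstep : ∀ j : Fin m, c * (ρ^s * (T:ℝ)^s * ((A j:ℝ))^(-s)) ≤ (N ((T - B) / A j) : ℝ) := by
        intro j
        have hAj := hA j
        have hApos : (0:ℝ) < (A j : ℝ) := by exact_mod_cast by omega
        obtain ⟨D, hD⟩ : ∃ x : ℕ, x = (T - B) / A j := ⟨_, rfl⟩
        have hDlt : D < T := by
          have h1 : (T - B) / A j ≤ T / A j := Nat.div_le_div_right (by omega)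
          have h2 : T / A j ≤ T / 2 := Nat.div_le_div_left hAj (by omega)
          have h3 : T / 2 < T := by omega
          omega
        have hDge : Tb ≤ D := by
          rw [hD, Nat.le_div_iff_mul_le (by omega)]
          have h1 : A j ≤ Amax := hAmax ▸ Finset.le_sup (Finset.mem_univ j)
          have h2 : Tb * A j ≤ Amax * (Tb + 1) := by nlinarith
          omega
        have ihD := ih D hDlt hDge
        have hmod : A j * D + (T - B) % A j = T - B := by
          rw [hD]; exact Nat.div_add_mod _ _
        have hmodlt : (T - B) % A j < A j := Nat.mod_lt _ (by omega)
        have h5 : A j * D + A j ≥ (T - B) + 1 := by omega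
        have h6 : (A j : ℝ) * (D:ℝ) + (A j:ℝ) ≥ ((T:ℝ) - B) + 1 := by
          have := (Nat.cast_le (α := ℝ)).mpr h5
          push_cast [Nat.cast_sub hBT] at this
          linarith
        have h7 : (A j : ℝ) + B ≤ K := by
          have h1 : A j ≤ Amax := hAmax ▸ Finset.le_sup (Finset.mem_univ j)
          exact_mod_cast by omega
        have h4 : (A j : ℝ) * (D:ℝ) ≥ (T:ℝ) - (K:ℝ) := by linarith
        have hTρ' : (K : ℝ) ≤ (1 - ρ) * T := by
          have h8 : ((K:ℝ)/(1-ρ)) ≤ (Tρ : ℝ) := hTρ ▸ Nat.le_ceil _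
          have h9 : (Tρ : ℝ) ≤ T := by exact_mod_cast by omega
          rw [div_le_iff₀ (by linarith)] at h8
          nlinarith
        have h10 : ρ * (T:ℝ) / (A j:ℝ) ≤ (D:ℝ) := by
          have hq : ρ * (T:ℝ) ≤ (D:ℝ) * (A j:ℝ) := by nlinarith [h4, hTρ']
          exact (div_le_iff₀ hApos).mpr hq
        have h11 : (ρ * (T:ℝ) / (A j:ℝ)) ^ s ≤ (D:ℝ) ^ s :=
          Real.rpow_le_rpow (by positivity) h10 hs.le
        have h12 : (ρ * (T:ℝ) / (A j:ℝ)) ^ s = ρ^s * (T:ℝ)^s * ((A j:ℝ))^(-s) := by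
          rw [Real.div_rpow (by positivity) (by positivity),
            Real.mul_rpow hρ0.le (Nat.cast_nonneg T), Real.rpow_neg hApos.le, div_eq_mul_inv]
        rw [← hD]
        calc c * (ρ^s * (T:ℝ)^s * ((A j:ℝ))^(-s)) = c * (ρ * (T:ℝ) / (A j:ℝ)) ^ s := by
              rw [h12]
        _ ≤ c * ((D:ℕ):ℝ)^s := by
              nlinarith [h11, hcpos, Real.rpow_nonneg (by positivity : (0:ℝ) ≤ ρ * (T:ℝ) / (A j:ℝ)) s]
        _ ≤ (N D : ℝ) := ihD
      have hsum : ∑ j, c * (ρ^s * (T:ℝ)^s * ((A j:ℝ))^(-s))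
          = c * (ρ^s * (T:ℝ)^s * θ) := by
        rw [← Finset.mul_sum, ← Finset.mul_sum, ← hθdef]
      calc c * (T:ℝ)^s = c * (ρ^s * (T:ℝ)^s * θ) := by
            linear_combination (c * (T:ℝ)^s) * hρs.symm
      _ = ∑ j, c * (ρ^s * (T:ℝ)^s * ((A j:ℝ))^(-s)) := hsum.symm
      _ ≤ ∑ j, (N ((T - B) / A j) : ℝ) := Finset.sum_le_sum fun j _ => hstep j
      _ ≤ (N T : ℝ) := by exact_mod_cast hrecT

lemma side_bounds (F : Set ℤ) (hF : F.Infinite) {n : ℕ} (a b : Fin n → ℤ)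
    (ha : ∀ i, 1 < |a i|)
    (hunion : F = ⋃ i, (fun x => a i * x + b i) '' F)
    (hdisj : ∀ i j, i ≠ j →
      Disjoint ((fun x => a i * x + b i) '' F) ((fun x => a j * x + b j) '' F))
    (α : ℝ) (hα : ∑ i : Fin n, (|(a i : ℝ)|) ^ (-α) = 1) :
    0 ≤ α ∧
    (∀ s : ℝ, α < s → ∃ C : ℝ, 0 < C ∧ ∀ T : ℕ,
      (((F ∩ Set.Icc (-(T:ℤ)) (T:ℤ)).ncard : ℝ)) ≤ C * ((T:ℝ)+1)^s) ∧
    (∀ s : ℝ, 0 < s → s < α → ∃ c : ℝ, 0 < c ∧ ∃ T2 : ℕ, ∀ T : ℕ, T2 ≤ T →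
      c * (T:ℝ)^s ≤ ((F ∩ Set.Icc (-(T:ℤ)) (T:ℤ)).ncard : ℝ)) := by
  classical
  have hA : ∀ i, 2 ≤ (a i).natAbs := by
    intro i; have := ha i; rw [Int.abs_eq_natAbs] at this; exact_mod_cast this
  have hα' : ∑ i : Fin n, (((a i).natAbs : ℝ)) ^ (-α) = 1 := by
    rw [← hα]; exact Finset.sum_congr rfl fun i _ => by rw [Nat.cast_natAbs, Int.cast_abs]
  rcases Nat.eq_zero_or_pos n with hn0 | hn
  · subst hn0; norm_num [Finset.univ_eq_empty] at hα'
  haveI : Nonempty (Fin n) := ⟨⟨0, hn⟩⟩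
  have hne : (Finset.univ : Finset (Fin n)).Nonempty := Finset.univ_nonempty
  have hbase : ∀ i : Fin n, (1:ℝ) < ((a i).natAbs : ℝ) := by
    intro i; exact_mod_cast hA i
  have hα0 : 0 ≤ α := by
    by_contra hlt
    push_neg at hlt
    have h1 : ∀ i ∈ Finset.univ, (1:ℝ) < (((a i).natAbs : ℝ)) ^ (-α) := fun i _ =>
      (Real.one_lt_rpow_iff_of_pos (by linarith [hbase i])).mpr
        (Or.inl ⟨hbase i, by linarith⟩)
    have h2 := Finset.sum_lt_sum_of_nonempty hne h1
    rw [hα'] at h2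
    simp only [Finset.sum_const, Finset.card_univ, Fintype.card_fin, nsmul_eq_mul,
      mul_one] at h2
    have : (1:ℝ) ≤ (n:ℝ) := by exact_mod_cast hn
    linarith
  refine ⟨hα0, ?_, ?_⟩
  · intro s hαs
    have hs : 0 < s := lt_of_le_of_lt hα0 hαs
    have hθlt : ∑ i : Fin n, (((a i).natAbs : ℝ)) ^ (-s) < 1 := by
      rw [← hα']
      exact Finset.sum_lt_sum_of_nonempty hne fun i _ =>
        (Real.rpow_lt_rpow_left_iff (hbase i)).mpr (by linarith)
    have hθpos : 0 < ∑ i : Fin n, (((a i).natAbs : ℝ)) ^ (-s) :=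
      Finset.sum_pos (fun i _ => Real.rpow_pos_of_pos (by linarith [hbase i]) _) hne
    exact growth_upper (fun T : ℕ => (F ∩ Set.Icc (-(T:ℤ)) (T:ℤ)).ncard)
      (fun i => (a i).natAbs) (Finset.univ.sup fun i => (b i).natAbs) hA s hs hθpos hθlt
      (fun T => count_up F a b ha hunion T)
  · intro s hs hsα
    have hθgt : 1 < ∑ i : Fin n, (((a i).natAbs : ℝ)) ^ (-s) := by
      rw [← hα']
      exact Finset.sum_lt_sum_of_nonempty hne fun i _ =>
        (Real.rpow_lt_rpow_left_iff (hbase i)).mpr (by linarith)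
    obtain ⟨x0, hx0⟩ := hF.nonempty
    have hpos : ∀ T : ℕ, x0.natAbs ≤ T → 1 ≤ (F ∩ Set.Icc (-(T:ℤ)) (T:ℤ)).ncard := by
      intro T hT
      have hmem : x0 ∈ F ∩ Set.Icc (-(T:ℤ)) (T:ℤ) :=
        ⟨hx0, Set.mem_Icc.mpr (by omega)⟩
      have hfin : (F ∩ Set.Icc (-(T:ℤ)) (T:ℤ)).Finite :=
        (Set.finite_Icc _ _).subset Set.inter_subset_right
      exact (Set.ncard_pos hfin).mpr ⟨x0, hmem⟩
    exact growth_lower (fun T : ℕ => (F ∩ Set.Icc (-(T:ℤ)) (T:ℤ)).ncard)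
      (fun i => (a i).natAbs) (Finset.univ.sup fun i => (b i).natAbs) hA s hs hθgt
      (fun T hT => count_down F a b ha hunion hdisj T hT) x0.natAbs hpos

lemma final_compare {N : ℕ → ℕ} {α β : ℝ} (hα0 : 0 ≤ α)
    (hup : ∀ s : ℝ, α < s → ∃ C : ℝ, 0 < C ∧ ∀ T : ℕ, (N T : ℝ) ≤ C * ((T:ℝ)+1)^s)
    (hlo : ∀ s : ℝ, 0 < s → s < β → ∃ c : ℝ, 0 < c ∧ ∃ T2 : ℕ, ∀ T : ℕ, T2 ≤ T →
      c * (T:ℝ)^s ≤ (N T : ℝ)) :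
    β ≤ α := by
  by_contra h
  push_neg at h
  set s : ℝ := (2*α+β)/3 with hsdef
  set s' : ℝ := (α+2*β)/3 with hs'def
  have hs1 : α < s := by rw [hsdef]; linarith
  have hspos : 0 < s := lt_of_le_of_lt hα0 hs1
  have hss' : s < s' := by rw [hsdef, hs'def]; linarith
  have hs'β : s' < β := by rw [hs'def]; linarith
  have hs'pos : 0 < s' := by linarith
  obtain ⟨C, hC, hupC⟩ := hup s hs1
  obtain ⟨c, hc0, T2, hloc⟩ := hlo s' hs'pos hs'β
  have htend : Filter.Tendsto (fun T : ℕ => ((T:ℝ))^(s'-s)) Filter.atTop Filter.atTop :=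
    (tendsto_rpow_atTop (by linarith : (0:ℝ) < s' - s)).comp tendsto_natCast_atTop_atTop
  have hev := (htend.eventually_gt_atTop (C * 2^s / c)).and
    ((Filter.eventually_ge_atTop T2).and (Filter.eventually_ge_atTop 1))
  obtain ⟨T, hgt, hT2, hT1⟩ := hev.exists
  have hT1' : (1:ℝ) ≤ (T:ℝ) := by exact_mod_cast hT1
  have hTpos : (0:ℝ) < (T:ℝ) := by linarith
  have e1 := hloc T hT2
  have e2 := hupC T
  have e3 : ((T:ℝ)+1)^s ≤ (2*(T:ℝ))^s :=
    Real.rpow_le_rpow (by linarith) (by linarith) hspos.le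
  have e4 : (2*(T:ℝ))^s = 2^s * (T:ℝ)^s :=
    Real.mul_rpow (by norm_num) (by linarith)
  have e5 : (T:ℝ)^(s'-s) * (T:ℝ)^s = (T:ℝ)^s' := by
    rw [← Real.rpow_add hTpos]; ring_nf
  have e6 : C * 2^s < c * (T:ℝ)^(s'-s) := by
    rw [div_lt_iff₀ hc0] at hgt
    linarith [hgt, mul_comm c ((T:ℝ)^(s'-s))]
  have hTs : (0:ℝ) < (T:ℝ)^s := Real.rpow_pos_of_pos hTpos s
  have e7 : C * 2^s * (T:ℝ)^s < c * (T:ℝ)^s' := by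
    calc C * 2^s * (T:ℝ)^s < (c * (T:ℝ)^(s'-s)) * (T:ℝ)^s :=
          mul_lt_mul_of_pos_right e6 hTs
    _ = c * (T:ℝ)^s' := by rw [mul_assoc, e5]
  nlinarith [e1, e2, e3, e4, e7, hC, Real.rpow_nonneg (by linarith : (0:ℝ) ≤ (T:ℝ)+1) s]

/-- The fractal dimension of a fractal in `ℤ` is independent of the choice of
representing affine maps: if `F = ⨆ᵢ φᵢ(F) = ⨆ⱼ ψⱼ(F)` as disjoint unions
with `∑ |aᵢ|^(-α) = 1` and `∑ |cⱼ|^(-β) = 1`, then `α = β`. -/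
theorem fractal_dimension_well_defined
    (n m : ℕ) (a b : Fin n → ℤ) (c d : Fin m → ℤ) (F : Set ℤ)
    (hF_inf : F.Infinite)
    (ha : ∀ i, 1 < |a i|) (hc : ∀ j, 1 < |c j|)
    (hunion₁ : F = ⋃ i, (fun x => a i * x + b i) '' F)
    (hdisj₁ : ∀ i j, i ≠ j →
      Disjoint ((fun x => a i * x + b i) '' F) ((fun x => a j * x + b j) '' F))
    (hunion₂ : F = ⋃ j, (fun x => c j * x + d j) '' F)
    (hdisj₂ : ∀ i j, i ≠ j →
      Disjoint ((fun x => c i * x + d i) '' F) ((fun x => c j * x + d j) '' F))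
    (α β : ℝ)
    (hα : ∑ i : Fin n, (|(a i : ℝ)|) ^ (-α) = 1)
    (hβ : ∑ j : Fin m, (|(c j : ℝ)|) ^ (-β) = 1) :
    α = β := by
  obtain ⟨hα0, hup1, hlo1⟩ := side_bounds F hF_inf a b ha hunion₁ hdisj₁ α hα
  obtain ⟨hβ0, hup2, hlo2⟩ := side_bounds F hF_inf c d hc hunion₂ hdisj₂ β hβ
  exact le_antisymm
    (final_compare (N := fun T : ℕ => (F ∩ Set.Icc (-(T:ℤ)) (T:ℤ)).ncard) hβ0 hup2 hlo1)
    (final_compare (N := fun T : ℕ => (F ∩ Set.Icc (-(T:ℤ)) (T:ℤ)).ncard) hα0 hup1 hlo2)
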